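/- (ε,δ)-differential privacy of the Gaussian mechanism (Lemma 1, Gaussian case): Let ε ∈ (0,1], δ ∈ (0,1), Δ > 0, and let x, x' ∈ ℝ^d satisfy ‖x − x'‖₂ ≤ Δ. Set σ = √(2 ln(1.25/δ))·Δ/ε and let ν be the probability measure on ℝ^d whose coordinates are i.i.d. Gaussian with mean 0 and variance σ². Let μ_x and μ_{x'} denote the pushforwards of ν under z ↦ x + z and z ↦ x' + z. Then for every measurable set A ⊆ ℝ^d, μ_x(A) ≤ e^ε · μ_{x'}(A) + δ. -/

import Mathlib

open Real MeasureTheory Set RealInnerProductSpace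

set_option maxHeartbeats 1000000 in
lemma dp_tail_bound (δ σ a : ℝ) (hδ0 : 0 < δ) (hδ1 : δ < 1) (hσ : 0 < σ)
    (ha : σ * (Real.sqrt (2 * Real.log (1.25 / δ)) -
        1 / (2 * Real.sqrt (2 * Real.log (1.25 / δ)))) ≤ a) :
    ∫ s in Set.Ioi a, Real.exp (-(2 * σ ^ 2)⁻¹ * s ^ 2) ≤
      δ * ∫ s : ℝ, Real.exp (-(2 * σ ^ 2)⁻¹ * s ^ 2) := by
  have hδq : (1.25 : ℝ) / δ > 1 := by
    rw [gt_iff_lt, lt_div_iff₀ hδ0]; linarith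
  set L : ℝ := Real.log (1.25 / δ) with hLdef
  have hL0 : 0 < L := Real.log_pos hδq
  have hL2 : 0.2 ≤ L := by
    have h8 : Real.log 0.8 ≤ -0.2 := by
      have := Real.log_le_sub_one_of_pos (show (0:ℝ) < 0.8 by norm_num)
      linarith
    have h125 : (0.2 : ℝ) ≤ Real.log 1.25 := by
      have : Real.log 1.25 = - Real.log 0.8 := by
        rw [← Real.log_inv]; norm_num
      linarith
    have hmono : Real.log 1.25 ≤ L := by
      apply Real.log_le_log (by norm_num)
      rw [le_div_iff₀ hδ0]; nlinarith
    linarith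
  have hexpL : Real.exp (-L) = δ / 1.25 := by
    rw [Real.exp_neg, hLdef, Real.exp_log (by linarith), inv_div]
  set c : ℝ := Real.sqrt (2 * L) with hcdef
  have hc0 : 0 < c := Real.sqrt_pos.mpr (by linarith)
  have hc2 : c ^ 2 = 2 * L := Real.sq_sqrt (by linarith)
  have hcge : 0.63 ≤ c := by
    rw [hcdef, show (0.63:ℝ) = Real.sqrt (0.63 ^ 2) by rw [Real.sqrt_sq]; norm_num]
    apply Real.sqrt_le_sqrt; nlinarith
  set b : ℝ := (2 * σ ^ 2)⁻¹ with hbdef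
  have hb0 : 0 < b := by positivity
  set g : ℝ → ℝ := fun s => Real.exp (-b * s ^ 2) with hgdef
  have hgint : Integrable g := integrable_exp_neg_mul_sq hb0
  have hgnn : ∀ s, 0 ≤ g s := fun s => (Real.exp_pos _).le
  have hI : ∫ s : ℝ, g s = Real.sqrt (π / b) := integral_gaussian b
  have hI0 : ∫ s in Set.Ioi (0:ℝ), g s = Real.sqrt (π / b) / 2 := integral_gaussian_Ioi b
  have hIpos : 0 < Real.sqrt (π / b) := Real.sqrt_pos.mpr (by positivity)
  have hIge : 2.5 * σ ≤ Real.sqrt (π / b) := by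
    have h1 : (6.25 : ℝ) * σ ^ 2 ≤ π / b := by
      rw [hbdef, div_eq_mul_inv, inv_inv]
      nlinarith [Real.pi_gt_d6, sq_nonneg σ]
    calc 2.5 * σ = Real.sqrt ((2.5 * σ) ^ 2) := by rw [Real.sqrt_sq]; positivity
    _ ≤ Real.sqrt (π / b) := by apply Real.sqrt_le_sqrt; nlinarith
  set γ : ℝ := c - 1 / (2 * c) with hγdef
  have hmono : ∫ s in Set.Ioi a, g s ≤ ∫ s in Set.Ioi (σ * γ), g s := by
    apply setIntegral_mono_set hgint.integrableOn
    · exact Filter.Eventually.of_forall fun s => hgnn s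
    · exact HasSubset.Subset.eventuallyLE (Set.Ioi_subset_Ioi ha)
  have key : ∫ s in Set.Ioi (σ * γ), g s ≤ δ * Real.sqrt (π / b) := by
    rcases le_or_gt 0 γ with hγ | hγ
    · -- Chernoff case
      have hsub : ∫ s in Set.Ioi (σ * γ), g s = ∫ u in Set.Ioi (0:ℝ), g (u + σ * γ) := by
        have hmp : MeasurePreserving (fun u : ℝ => u + σ * γ) volume volume :=
          measurePreserving_add_right volume (σ * γ)
        have hemb : MeasurableEmbedding (fun u : ℝ => u + σ * γ) :=
          (MeasurableEquiv.addRight (σ * γ)).measurableEmbedding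
        have hpre : (fun u : ℝ => u + σ * γ) ⁻¹' (Set.Ioi (σ * γ)) = Set.Ioi 0 := by
          ext u; simp [Set.mem_Ioi]
        rw [← hmp.setIntegral_preimage_emb hemb, hpre]
      have hpt : ∀ u : ℝ, g (u + σ * γ) =
          Real.exp (-γ ^ 2 / 2) * (g u * Real.exp (-(γ / σ) * u)) := by
        intro u
        show Real.exp (-b * (u + σ * γ) ^ 2) = _
        rw [← Real.exp_add, ← Real.exp_add]
        congr 1
        rw [hbdef]
        field_simp
        ring
      have hintu : IntegrableOn (fun u => g u * Real.exp (-(γ / σ) * u)) (Set.Ioi 0) := by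
        apply Integrable.mono' hgint.integrableOn
        · exact (Measurable.mul (by fun_prop) (by fun_prop)).aestronglyMeasurable
        · filter_upwards [ae_restrict_mem measurableSet_Ioi] with u hu
          rw [Real.norm_eq_abs, abs_mul, abs_of_nonneg (hgnn u),
            abs_of_nonneg (Real.exp_pos _).le]
          have h1 : Real.exp (-(γ / σ) * u) ≤ 1 := by
            rw [Real.exp_le_one_iff]
            have h2 : 0 ≤ γ / σ := div_nonneg hγ hσ.le
            nlinarith [Set.mem_Ioi.mp hu]
          nlinarith [hgnn u]
      have hbound : ∫ u in Set.Ioi (0:ℝ), g (u + σ * γ) ≤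
          Real.exp (-γ ^ 2 / 2) * (Real.sqrt (π / b) / 2) := by
        calc ∫ u in Set.Ioi (0:ℝ), g (u + σ * γ)
            = Real.exp (-γ ^ 2 / 2) * ∫ u in Set.Ioi (0:ℝ),
                g u * Real.exp (-(γ / σ) * u) := by
              simp_rw [hpt]; rw [integral_const_mul]
          _ ≤ Real.exp (-γ ^ 2 / 2) * ∫ u in Set.Ioi (0:ℝ), g u := by
              refine mul_le_mul_of_nonneg_left ?_ (Real.exp_pos _).le
              refine setIntegral_mono_on hintu hgint.integrableOn measurableSet_Ioi ?_
              intro u hu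
              have h1 : Real.exp (-(γ / σ) * u) ≤ 1 := by
                rw [Real.exp_le_one_iff]
                have h2 : 0 ≤ γ / σ := div_nonneg hγ hσ.le
                nlinarith [Set.mem_Ioi.mp hu]
              nlinarith [hgnn u, Real.exp_pos (-(γ / σ) * u)]
          _ = Real.exp (-γ ^ 2 / 2) * (Real.sqrt (π / b) / 2) := by rw [hI0]
      have hnum : Real.exp (-γ ^ 2 / 2) ≤ 2 * δ := by
        have h1 : -γ ^ 2 / 2 ≤ 1 / 2 + -L := by
          have hγ2 : γ ^ 2 = c ^ 2 - 1 + 1 / (4 * c ^ 2) := by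
            rw [hγdef]; field_simp; ring
          rw [hγ2, hc2]
          have h3 : (0:ℝ) ≤ 1 / (4 * (2 * L)) := by positivity
          linarith
        calc Real.exp (-γ ^ 2 / 2) ≤ Real.exp (1 / 2) * Real.exp (-L) := by
              rw [← Real.exp_add]; exact Real.exp_le_exp.mpr h1
          _ ≤ 2.5 * (δ / 1.25) := by
              rw [hexpL]
              refine mul_le_mul_of_nonneg_right ?_ (by positivity)
              rw [show ((1:ℝ)/2) = (1:ℝ)/2 from rfl, Real.exp_half 1,
                show (2.5:ℝ) = Real.sqrt (2.5 ^ 2) by rw [Real.sqrt_sq] <;> norm_num]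
              apply Real.sqrt_le_sqrt
              nlinarith [Real.exp_one_lt_d9]
          _ = 2 * δ := by ring
      calc ∫ s in Set.Ioi (σ * γ), g s ≤ Real.exp (-γ ^ 2 / 2) * (Real.sqrt (π / b) / 2) := by
            rw [hsub]; exact hbound
        _ ≤ 2 * δ * (Real.sqrt (π / b) / 2) :=
            mul_le_mul_of_nonneg_right hnum (by positivity)
        _ = δ * Real.sqrt (π / b) := by ring
    · -- large δ case
      rw [hγdef] at hγ
      have hδbig : 15 / 16 < δ := by
        have hlt1 : c < 1 / (2 * c) := by linarith
        have hcc : c * (2 * c) < 1 := (lt_div_iff₀ (by linarith)).mp hlt1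
        have hLlt : L < 1 / 4 := by nlinarith
        have he4 : Real.exp (1 / 4 : ℝ) ≤ 4 / 3 := by
          have h34 : (3 / 4 : ℝ) ≤ Real.exp (-(1/4) : ℝ) := by
            have := Real.add_one_le_exp (-(1/4) : ℝ); linarith
          have hprod : Real.exp (1/4 : ℝ) * Real.exp (-(1/4) : ℝ) = 1 := by
            rw [← Real.exp_add]; norm_num
          nlinarith [Real.exp_pos (1/4 : ℝ)]
        have hlt : (1.25 : ℝ) / δ < 4 / 3 := by
          calc (1.25 : ℝ) / δ = Real.exp L := (Real.exp_log (by linarith)).symm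
            _ < Real.exp (1/4) := Real.exp_lt_exp.mpr hLlt
            _ ≤ 4 / 3 := he4
        rw [div_lt_iff₀ hδ0] at hlt
        linarith
      have hγlb : -γ ≤ 0.159 := by
        rw [hγdef]
        have h4 : 1 / (2 * c) ≤ c + 0.159 := by
          rw [div_le_iff₀ (by linarith)]
          nlinarith
        linarith
      have hσγ : σ * γ ≤ 0 := by
        have : γ < 0 := by rw [hγdef]; exact hγ
        nlinarith
      have hsplit : ∫ s in Set.Ioi (σ * γ), g s =
          (∫ s in Set.Ioc (σ * γ) 0, g s) + ∫ s in Set.Ioi (0:ℝ), g s := by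
        rw [← Set.Ioc_union_Ioi_eq_Ioi hσγ,
          setIntegral_union (Set.Ioc_disjoint_Ioi le_rfl) measurableSet_Ioi
            hgint.integrableOn hgint.integrableOn]
      have hIoc : ∫ s in Set.Ioc (σ * γ) 0, g s ≤ 0.159 * σ := by
        have h1 : ∫ s in Set.Ioc (σ * γ) 0, g s ≤ ∫ _ in Set.Ioc (σ * γ) 0, (1:ℝ) := by
          refine setIntegral_mono_on hgint.integrableOn
            (integrableOn_const measure_Ioc_lt_top.ne) measurableSet_Ioc ?_
          intro u _
          show Real.exp (-b * u ^ 2) ≤ 1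
          rw [Real.exp_le_one_iff]
          nlinarith [sq_nonneg u]
        have h2 : ∫ _ in Set.Ioc (σ * γ) 0, (1:ℝ) = -(σ * γ) := by
          rw [setIntegral_const, Real.volume_real_Ioc_of_le hσγ, smul_eq_mul, mul_one]
          ring
        have h3 : -(σ * γ) ≤ 0.159 * σ := by nlinarith
        exact le_trans h1 (le_trans h2.le h3)
      have : (0.159 : ℝ) * σ + Real.sqrt (π / b) / 2 ≤ δ * Real.sqrt (π / b) := by
        nlinarith
      rw [hsplit, hI0]
      linarith
  calc ∫ s in Set.Ioi a, g s ≤ ∫ s in Set.Ioi (σ * γ), g s := hmono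
    _ ≤ δ * Real.sqrt (π / b) := key
    _ = δ * ∫ s : ℝ, g s := by rw [hI]

lemma gauss_pt (d : ℕ) (b : ℝ) (y : Fin d → ℝ) :
    Real.exp (-b * ‖(MeasurableEquiv.toLp 2 (Fin d → ℝ)).symm.symm y‖ ^ 2)
      = ∏ i, Real.exp (-b * (y i) ^ 2) := by
  have hcoord : ∀ i, ((MeasurableEquiv.toLp 2 (Fin d → ℝ)).symm.symm y) i = y i := by
    intro i; rfl
  rw [EuclideanSpace.norm_eq]
  rw [Real.sq_sqrt (by positivity)]
  rw [← Real.exp_sum]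
  congr 1
  rw [Finset.mul_sum]
  congr 1; ext i
  rw [hcoord i, Real.norm_eq_abs, sq_abs]

lemma gauss_int_euclidean (d : ℕ) (b : ℝ) (hb : 0 < b) :
    Integrable (fun z : EuclideanSpace ℝ (Fin d) => Real.exp (-b * ‖z‖ ^ 2)) := by
  have hmp := (EuclideanSpace.volume_preserving_symm_measurableEquiv_toLp (Fin d)).symm
  rw [← hmp.integrable_comp_emb (MeasurableEquiv.measurableEmbedding _)]
  have : ((fun z : EuclideanSpace ℝ (Fin d) => Real.exp (-b * ‖z‖ ^ 2)) ∘
      (MeasurableEquiv.toLp 2 (Fin d → ℝ)).symm.symm)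
      = fun y : Fin d → ℝ => ∏ i, Real.exp (-b * (y i) ^ 2) := by
    funext y; exact gauss_pt d b y
  rw [this]
  exact Integrable.fintype_prod (fun _ => integrable_exp_neg_mul_sq hb)

lemma gauss_int_eq_pow (d : ℕ) (b : ℝ) (hb : 0 < b) :
    ∫ z : EuclideanSpace ℝ (Fin d), Real.exp (-b * ‖z‖ ^ 2)
      = (∫ s : ℝ, Real.exp (-b * s ^ 2)) ^ d := by
  have hmp := (EuclideanSpace.volume_preserving_symm_measurableEquiv_toLp (Fin d)).symm
  rw [← hmp.integral_comp']
  have : ∀ y : Fin d → ℝ, (fun z : EuclideanSpace ℝ (Fin d) => Real.exp (-b * ‖z‖ ^ 2))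
      ((MeasurableEquiv.toLp 2 (Fin d → ℝ)).symm.symm y)
      = ∏ i, Real.exp (-b * (y i) ^ 2) := gauss_pt d b
  rw [integral_congr_ae (Filter.Eventually.of_forall this)]
  rw [MeasureTheory.integral_fintype_prod_volume_eq_pow (ι := Fin d) (fun s => Real.exp (-b * s ^ 2))]
  rw [Fintype.card_fin]

lemma gauss_halfspace (d : ℕ) (b : ℝ) (hb : 0 < b) (i₀ : Fin d) (a : ℝ) :
    ∫ z in {z : EuclideanSpace ℝ (Fin d) | a < z i₀}, Real.exp (-b * ‖z‖ ^ 2)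
      = (∫ s in Set.Ioi a, Real.exp (-b * s ^ 2))
        * (∫ s : ℝ, Real.exp (-b * s ^ 2)) ^ (d - 1) := by
  classical
  have hmp := (EuclideanSpace.volume_preserving_symm_measurableEquiv_toLp (Fin d)).symm
  have hemb := ((MeasurableEquiv.toLp 2 (Fin d → ℝ)).symm.symm).measurableEmbedding
  rw [← hmp.setIntegral_preimage_emb hemb]
  have hpre : (MeasurableEquiv.toLp 2 (Fin d → ℝ)).symm.symm ⁻¹'
      {z : EuclideanSpace ℝ (Fin d) | a < z i₀} = {y : Fin d → ℝ | a < y i₀} := by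
    ext y; simp only [Set.mem_preimage, Set.mem_setOf_eq]; rfl
  rw [hpre]
  have hcong : ∀ y ∈ {y : Fin d → ℝ | a < y i₀},
      Real.exp (-b * ‖(MeasurableEquiv.toLp 2 (Fin d → ℝ)).symm.symm y‖ ^ 2)
        = ∏ i, Real.exp (-b * (y i) ^ 2) := fun y _ => gauss_pt d b y
  rw [setIntegral_congr_fun (by exact measurableSet_lt measurable_const (measurable_pi_apply i₀)) hcong]
  -- now pure pi computation
  set g : ℝ → ℝ := fun s => Real.exp (-b * s ^ 2) with hg
  set h : Fin d → ℝ → ℝ := fun i => if i = i₀ then (Set.Ioi a).indicator g else g with hh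
  have hset : MeasurableSet {y : Fin d → ℝ | a < y i₀} :=
    measurableSet_lt measurable_const (measurable_pi_apply i₀)
  have hind : ∀ y : Fin d → ℝ,
      ({y : Fin d → ℝ | a < y i₀}).indicator (fun y => ∏ i, g (y i)) y
        = ∏ i, h i (y i) := by
    intro y
    by_cases hy : a < y i₀
    · rw [Set.indicator_of_mem (show y ∈ {y : Fin d → ℝ | a < y i₀} from hy)]
      refine Finset.prod_congr rfl fun i _ => ?_
      rcases eq_or_ne i i₀ with hi | hi
      · subst hi
        simp [hh, Set.indicator_of_mem (Set.mem_Ioi.mpr hy)]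
      · simp [hh, if_neg hi]
    · rw [Set.indicator_of_notMem (show y ∉ {y : Fin d → ℝ | a < y i₀} from hy)]
      refine (Finset.prod_eq_zero (Finset.mem_univ i₀) ?_).symm
      simp only [hh, if_pos rfl]
      exact Set.indicator_of_notMem (show y i₀ ∉ Set.Ioi a by simpa using hy) g
  rw [← integral_indicator hset]
  rw [integral_congr_ae (Filter.Eventually.of_forall hind)]
  rw [MeasureTheory.integral_fintype_prod_volume_eq_prod (ι := Fin d) h]
  rw [← Finset.mul_prod_erase Finset.univ _ (Finset.mem_univ i₀)]
  have h1 : ∫ s, h i₀ s = ∫ s in Set.Ioi a, g s := by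
    rw [hh]; simp only [if_pos rfl]
    exact integral_indicator measurableSet_Ioi
  have h2 : ∏ i ∈ Finset.univ.erase i₀, ∫ s, h i s = (∫ s, g s) ^ (d - 1) := by
    rw [Finset.prod_congr rfl (fun i hi => ?_), Finset.prod_const,
      Finset.card_erase_of_mem (Finset.mem_univ i₀), Finset.card_univ, Fintype.card_fin]
    rw [hh]; simp only [if_neg (Finset.mem_erase.mp hi).1]
  rw [h1, h2]

set_option maxHeartbeats 1000000

/-- (ε,δ)-differential privacy of the Gaussian mechanism (Lemma 1, Gaussian
case).  The spherical Gaussian with coordinate variance `σ² = 2 ln(1.25/δ) Δ²/ε²` is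
formalized via its density proportional to `exp (-‖z‖²/(2σ²))`. -/
theorem gaussian_mechanism_eps_delta_dp
    (d : ℕ) (ε δ Δ σ : ℝ) (hε : 0 < ε) (hε1 : ε ≤ 1) (hδ : δ ∈ Set.Ioo (0 : ℝ) 1)
    (hΔ : 0 < Δ) (hσ : σ = Real.sqrt (2 * Real.log (1.25 / δ)) * Δ / ε)
    (x x' : EuclideanSpace ℝ (Fin d)) (hx : ‖x - x'‖ ≤ Δ)
    (ν : Measure (EuclideanSpace ℝ (Fin d)))
    (hν : ν = (∫⁻ z : EuclideanSpace ℝ (Fin d),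
        ENNReal.ofReal (Real.exp (-‖z‖ ^ 2 / (2 * σ ^ 2))))⁻¹ •
      volume.withDensity (fun z => ENNReal.ofReal (Real.exp (-‖z‖ ^ 2 / (2 * σ ^ 2))))) :
    ∀ A : Set (EuclideanSpace ℝ (Fin d)), MeasurableSet A →
      (ν.map (fun z => x + z)) A ≤
        ENNReal.ofReal (Real.exp ε) * (ν.map (fun z => x' + z)) A + ENNReal.ofReal δ := by
  classical
  intro A hA
  obtain ⟨hδ0, hδ1⟩ := hδ
  have hδq : (1.25 : ℝ) / δ > 1 := by rw [gt_iff_lt, lt_div_iff₀ hδ0]; linarith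
  have hL0 : 0 < Real.log (1.25 / δ) := Real.log_pos hδq
  set C : ℝ := Real.sqrt (2 * Real.log (1.25 / δ)) with hC
  have hC0 : 0 < C := Real.sqrt_pos.mpr (by linarith)
  have hσ0 : 0 < σ := by rw [hσ]; exact div_pos (mul_pos hC0 hΔ) hε
  have hb0 : 0 < (2 * σ ^ 2)⁻¹ := by positivity
  have hfeq : (fun z : EuclideanSpace ℝ (Fin d) => Real.exp (-‖z‖ ^ 2 / (2 * σ ^ 2)))
      = (fun z : EuclideanSpace ℝ (Fin d) => Real.exp (-(2 * σ ^ 2)⁻¹ * ‖z‖ ^ 2)) := by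
    funext z; congr 1; field_simp
  set f : EuclideanSpace ℝ (Fin d) → ℝ :=
    fun z => Real.exp (-(2 * σ ^ 2)⁻¹ * ‖z‖ ^ 2) with hf
  have hfint : Integrable f := gauss_int_euclidean d _ hb0
  have hfnn : ∀ z, 0 ≤ f z := fun z => (Real.exp_pos _).le
  have hfeqE : (fun z : EuclideanSpace ℝ (Fin d) =>
        ENNReal.ofReal (Real.exp (-‖z‖ ^ 2 / (2 * σ ^ 2))))
      = fun z => ENNReal.ofReal (f z) := by
    funext z; exact congrArg ENNReal.ofReal (congrFun hfeq z)
  have hν' : ∀ T : Set (EuclideanSpace ℝ (Fin d)), MeasurableSet T →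
      ν T = (ENNReal.ofReal (∫ z, f z))⁻¹ * ENNReal.ofReal (∫ z in T, f z) := by
    intro T hT
    rw [hν, hfeqE, Measure.smul_apply, withDensity_apply _ hT, smul_eq_mul]
    rw [← ofReal_integral_eq_lintegral_ofReal hfint (Filter.Eventually.of_forall hfnn),
      ← ofReal_integral_eq_lintegral_ofReal hfint.integrableOn
        (Filter.Eventually.of_forall hfnn)]
  set I1 : ℝ := ∫ s : ℝ, Real.exp (-(2 * σ ^ 2)⁻¹ * s ^ 2) with hI1
  have hIT : ∫ z, f z = I1 ^ d := gauss_int_eq_pow d _ hb0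
  have hI1pos : 0 < I1 := by
    rw [hI1, integral_gaussian]; exact Real.sqrt_pos.mpr (by positivity)
  have hITpos : 0 < ∫ z, f z := by rw [hIT]; positivity
  have hmapx : (ν.map (fun z => x + z)) A = ν ((fun z => x + z) ⁻¹' A) :=
    Measure.map_apply (measurable_const_add x) hA
  have hmapx' : (ν.map (fun z => x' + z)) A = ν ((fun z => x' + z) ⁻¹' A) :=
    Measure.map_apply (measurable_const_add x') hA
  set S : Set (EuclideanSpace ℝ (Fin d)) := (fun z => x + z) ⁻¹' A with hSdef
  set S' : Set (EuclideanSpace ℝ (Fin d)) := (fun z => x' + z) ⁻¹' A with hS'def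
  have hSm : MeasurableSet S := hA.preimage (measurable_const_add x)
  have hS'm : MeasurableSet S' := hA.preimage (measurable_const_add x')
  rcases eq_or_ne x x' with hxx | hxx
  · -- trivial case
    have hSS : S = S' := by rw [hSdef, hS'def, hxx]
    rw [hmapx, hmapx', hSS]
    have h1 : (1 : ENNReal) ≤ ENNReal.ofReal (Real.exp ε) := by
      rw [ENNReal.one_le_ofReal]; exact Real.one_le_exp hε.le
    calc ν S' ≤ ENNReal.ofReal (Real.exp ε) * ν S' := le_mul_of_one_le_left zero_le h1
      _ ≤ _ := le_self_add
  · -- main case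
    set v : EuclideanSpace ℝ (Fin d) := x - x' with hv
    have hvne : v ≠ 0 := sub_ne_zero.mpr hxx
    have hn0 : 0 < ‖v‖ := norm_pos_iff.mpr hvne
    have hnΔ : ‖v‖ ≤ Δ := hx
    have hd : 0 < d := by
      rcases Nat.eq_zero_or_pos d with h0 | h; swap
      · exact h
      · exfalso; apply hxx; subst h0
        exact PiLp.ext fun i => Fin.elim0 i
    set i₀ : Fin d := ⟨0, hd⟩ with hi₀
    set u : EuclideanSpace ℝ (Fin d) := ‖v‖⁻¹ • v with hu
    have hu1 : ‖u‖ = 1 := by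
      rw [hu, norm_smul, norm_inv, norm_norm, inv_mul_cancel₀ hn0.ne']
    have hvu : ‖v‖ • u = v := by
      rw [hu, smul_smul, mul_inv_cancel₀ hn0.ne', one_smul]
    have horth : Orthonormal ℝ (({i₀} : Set (Fin d)).restrict fun _ => u) := by
      refine ⟨fun i => hu1, fun i j hij => absurd (Subtype.ext ?_) hij⟩
      have h1 : (i : Fin d) = i₀ := i.2
      have h2 : (j : Fin d) = i₀ := j.2
      rw [h1, h2]
    obtain ⟨B, hB⟩ := horth.exists_orthonormalBasis_extension_of_card_eq
      (by simp [finrank_euclideanSpace_fin])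
    have hBu : B i₀ = u := hB i₀ rfl
    have hTmp : MeasurePreserving B.repr volume volume := B.measurePreserving_repr
    have hinner : ∀ z : EuclideanSpace ℝ (Fin d), ⟪u, z⟫ = (B.repr z) i₀ := by
      intro z
      calc ⟪u, z⟫ = ⟪B.repr u, B.repr z⟫ := by
            rw [LinearIsometryEquiv.inner_map_map]
        _ = ⟪EuclideanSpace.single i₀ (1:ℝ), B.repr z⟫ := by
            rw [← hBu, B.repr_self i₀]
        _ = (B.repr z) i₀ := by rw [EuclideanSpace.inner_single_left]; simp
    set r : ℝ := σ ^ 2 * ε - ‖v‖ ^ 2 / 2 with hr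
    set G : Set (EuclideanSpace ℝ (Fin d)) := {z | ⟪v, z⟫ ≤ r} with hG
    have hGm : MeasurableSet G :=
      measurableSet_le ((continuous_const.inner continuous_id).measurable) measurable_const
    -- pointwise inequality on G
    have hpt : ∀ z ∈ G, f z ≤ Real.exp ε * f (z + v) := by
      intro z hz
      have hzv : ⟪v, z⟫ ≤ r := hz
      have hns : ‖z + v‖ ^ 2 = ‖z‖ ^ 2 + 2 * ⟪z, v⟫ + ‖v‖ ^ 2 := norm_add_sq_real z v
      have hcomm : ⟪z, v⟫ = ⟪v, z⟫ := (real_inner_comm z v).symm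
      rw [hf]
      show Real.exp (-(2 * σ ^ 2)⁻¹ * ‖z‖ ^ 2)
        ≤ Real.exp ε * Real.exp (-(2 * σ ^ 2)⁻¹ * ‖z + v‖ ^ 2)
      rw [← Real.exp_add, Real.exp_le_exp]
      have h2σ : (0:ℝ) < 2 * σ ^ 2 := by positivity
      have hkey : ‖z + v‖ ^ 2 - ‖z‖ ^ 2 ≤ ε * (2 * σ ^ 2) := by
        rw [hns, hcomm]; rw [hr] at hzv; nlinarith
      have hdiv : (‖z + v‖ ^ 2 - ‖z‖ ^ 2) / (2 * σ ^ 2) ≤ ε :=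
        (div_le_iff₀ h2σ).mpr hkey
      have hid : (‖z + v‖ ^ 2 - ‖z‖ ^ 2) / (2 * σ ^ 2)
          = (2 * σ ^ 2)⁻¹ * ‖z + v‖ ^ 2 - (2 * σ ^ 2)⁻¹ * ‖z‖ ^ 2 := by ring
      rw [hid] at hdiv; linarith
    -- shift step
    have hmp2 : MeasurePreserving (fun z : EuclideanSpace ℝ (Fin d) => z + v)
        volume volume := measurePreserving_add_right volume v
    have hemb2 : MeasurableEmbedding (fun z : EuclideanSpace ℝ (Fin d) => z + v) :=
      (MeasurableEquiv.addRight v).measurableEmbedding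
    have hfv_int : Integrable (fun z : EuclideanSpace ℝ (Fin d) => f (z + v)) :=
      (hmp2.integrable_comp_emb hemb2).mpr hfint
    have hshift : ∫ z in S ∩ G, f z ≤ Real.exp ε * ∫ z in S', f z := by
      have him : (fun z : EuclideanSpace ℝ (Fin d) => z + v) '' (S ∩ G) ⊆ S' := by
        rintro w ⟨z, ⟨hzS, _⟩, rfl⟩
        show x' + (z + v) ∈ A
        have : x' + (z + v) = x + z := by rw [hv]; abel
        rw [this]; exact hzS
      have hsub : ∫ z in S ∩ G, f (z + v) ≤ ∫ w in S', f w := by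
        have hpre2 : (fun z : EuclideanSpace ℝ (Fin d) => z + v) ⁻¹'
            ((fun z : EuclideanSpace ℝ (Fin d) => z + v) '' (S ∩ G)) = S ∩ G :=
          Set.preimage_image_eq _ (add_left_injective v)
        calc ∫ z in S ∩ G, f (z + v)
            = ∫ w in (fun z : EuclideanSpace ℝ (Fin d) => z + v) '' (S ∩ G), f w := by
              have h := hmp2.setIntegral_preimage_emb hemb2 f
                ((fun z : EuclideanSpace ℝ (Fin d) => z + v) '' (S ∩ G))
              rw [hpre2] at h
              exact h
          _ ≤ ∫ w in S', f w := setIntegral_mono_set hfint.integrableOn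
              (Filter.Eventually.of_forall hfnn) (HasSubset.Subset.eventuallyLE him)
      calc ∫ z in S ∩ G, f z
          ≤ ∫ z in S ∩ G, Real.exp ε * f (z + v) := by
            refine setIntegral_mono_on hfint.integrableOn
              ((hfv_int.const_mul _).integrableOn) (hSm.inter hGm) ?_
            intro z hz; exact hpt z hz.2
        _ = Real.exp ε * ∫ z in S ∩ G, f (z + v) := integral_const_mul _ _
        _ ≤ Real.exp ε * ∫ w in S', f w :=
            mul_le_mul_of_nonneg_left hsub (Real.exp_pos _).le
    -- tail step
    have htail : ∫ z in Gᶜ, f z ≤ δ * ∫ z, f z := by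
      set a : ℝ := r / ‖v‖ with ha
      have hGc : Gᶜ = B.repr ⁻¹' {w : EuclideanSpace ℝ (Fin d) | a < w i₀} := by
        ext z
        simp only [hG, Set.mem_compl_iff, Set.mem_setOf_eq, Set.mem_preimage, not_le]
        rw [← hinner z]
        have hvinner : ⟪v, z⟫ = ‖v‖ * ⟪u, z⟫ := by
          rw [← hvu, real_inner_smul_left, hvu]
        rw [hvinner, ha, div_lt_iff₀ hn0, mul_comm]
      have hrot : ∫ z in Gᶜ, f z
          = ∫ w in {w : EuclideanSpace ℝ (Fin d) | a < w i₀}, f w := by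
        rw [hGc]
        have hcongr : ∀ z : EuclideanSpace ℝ (Fin d), f z = f (B.repr z) := by
          intro z; rw [hf]
          show Real.exp (-(2 * σ ^ 2)⁻¹ * ‖z‖ ^ 2)
            = Real.exp (-(2 * σ ^ 2)⁻¹ * ‖B.repr z‖ ^ 2)
          rw [LinearIsometryEquiv.norm_map]
        calc ∫ z in B.repr ⁻¹' {w | a < w i₀}, f z
            = ∫ z in B.repr ⁻¹' {w | a < w i₀}, f (B.repr z) :=
              integral_congr_ae (Filter.Eventually.of_forall fun z => hcongr z)
          _ = ∫ w in {w | a < w i₀}, f w :=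
              hTmp.setIntegral_preimage_emb
                (B.repr.toHomeomorph.measurableEmbedding) f _
      rw [hrot, hf]
      rw [gauss_halfspace d _ hb0 i₀ a]
      have hatail : σ * (C - 1 / (2 * C)) ≤ a := by
        have hσε : σ * ε = C * Δ := by rw [hσ]; field_simp
        have hCn : C * ‖v‖ ≤ σ := by
          have h1 : C * ‖v‖ ≤ C * Δ := by nlinarith
          have h2 : σ * ε ≤ σ := by nlinarith
          linarith [h1, h2, hσε]
        have hexp2 : σ * (C - 1 / (2 * C)) = (2 * σ * C * C - σ) / (2 * C) := by
          field_simp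
        rw [hexp2, ha, div_le_div_iff₀ (by linarith) hn0]
        have hs2 : σ ^ 2 * ε = σ * (C * Δ) := by rw [← hσε]; ring
        rw [hr]
        nlinarith [mul_nonneg (mul_nonneg hσ0.le (mul_pos hC0 hC0).le)
            (sub_nonneg.mpr hnΔ),
          mul_nonneg (sub_nonneg.mpr hCn) hn0.le]
      have htb := dp_tail_bound δ σ a hδ0 hδ1 hσ0 (by rw [← hC]; exact hatail)
      have hd1 : d - 1 + 1 = d := Nat.succ_pred_eq_of_pos hd
      calc (∫ s in Set.Ioi a, Real.exp (-(2 * σ ^ 2)⁻¹ * s ^ 2)) * I1 ^ (d - 1)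
          ≤ (δ * I1) * I1 ^ (d - 1) := by
            refine mul_le_mul_of_nonneg_right ?_ (by positivity)
            rw [hI1]; exact htb
        _ = δ * I1 ^ d := by
            have hpow : I1 ^ d = I1 ^ (d - 1) * I1 := by
              conv_lhs => rw [← hd1]
              rw [pow_succ]
            rw [hpow]; ring
        _ = δ * ∫ z, f z := by rw [hIT]
    -- splitting step
    have hsplit : ∫ z in S, f z ≤ (∫ z in S ∩ G, f z) + ∫ z in Gᶜ, f z := by
      have h1 := integral_inter_add_diff (μ := volume) (f := f) (s := S) (t := G)
        hGm hfint.integrableOn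
      have h2 : ∫ z in S \ G, f z ≤ ∫ z in Gᶜ, f z :=
        setIntegral_mono_set hfint.integrableOn (Filter.Eventually.of_forall hfnn)
          (HasSubset.Subset.eventuallyLE fun z hz => hz.2)
      linarith
    have hmain : ∫ z in S, f z ≤ (Real.exp ε * ∫ z in S', f z) + δ * ∫ z, f z :=
      hsplit.trans (add_le_add hshift htail)
    -- ENNReal endgame
    rw [hmapx, hmapx', hν' S hSm, hν' S' hS'm]
    have hS'nn : 0 ≤ ∫ z in S', f z := setIntegral_nonneg hS'm fun z _ => hfnn z
    have hciT : ENNReal.ofReal (∫ z, f z) ≠ 0 :=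
      (ENNReal.ofReal_pos.mpr hITpos).ne'
    calc (ENNReal.ofReal (∫ z, f z))⁻¹ * ENNReal.ofReal (∫ z in S, f z)
        ≤ (ENNReal.ofReal (∫ z, f z))⁻¹ *
            ENNReal.ofReal ((Real.exp ε * ∫ z in S', f z) + δ * ∫ z, f z) :=
          mul_le_mul_right (ENNReal.ofReal_le_ofReal hmain) _
      _ = (ENNReal.ofReal (∫ z, f z))⁻¹ *
            (ENNReal.ofReal (Real.exp ε) * ENNReal.ofReal (∫ z in S', f z)
              + ENNReal.ofReal δ * ENNReal.ofReal (∫ z, f z)) := by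
          have h1nn : 0 ≤ Real.exp ε * ∫ z in S', f z :=
            mul_nonneg (Real.exp_pos ε).le hS'nn
          have h2nn : 0 ≤ δ * ∫ z, f z := mul_nonneg hδ0.le hITpos.le
          rw [ENNReal.ofReal_add h1nn h2nn,
            ENNReal.ofReal_mul (Real.exp_pos ε).le, ENNReal.ofReal_mul hδ0.le]
      _ = ENNReal.ofReal (Real.exp ε) *
            ((ENNReal.ofReal (∫ z, f z))⁻¹ * ENNReal.ofReal (∫ z in S', f z))
          + ENNReal.ofReal δ *
            ((ENNReal.ofReal (∫ z, f z))⁻¹ * ENNReal.ofReal (∫ z, f z)) := by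
          rw [mul_add, mul_left_comm, mul_left_comm (ENNReal.ofReal (∫ z, f z))⁻¹] 
      _ = ENNReal.ofReal (Real.exp ε) *
            ((ENNReal.ofReal (∫ z, f z))⁻¹ * ENNReal.ofReal (∫ z in S', f z))
          + ENNReal.ofReal δ := by
          rw [ENNReal.inv_mul_cancel hciT ENNReal.ofReal_ne_top, mul_one]
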